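/- For all a, s ∈ ℂ and p ∈ ℝ, one has A(a,s,p)³ ≥ B(a,s,p)²; equivalently, the homogeneous degree-8 polynomial F = A³ − B² on ℂ × ℂ × ℝ ≅ ℝ⁵ is everywhere nonnegative. -/

import Mathlib

open Complex

/-- `A(a,s,p) = (1/9)·|s|^{2/3}·(48|a|² + 12|s|² + p²)`. -/
noncomputable def Afun (a s : ℂ) (p : ℝ) : ℝ :=
  (1/9) * (‖s‖) ^ ((2:ℝ)/3)
    * (48 * (‖a‖) ^ 2 + 12 * (‖s‖) ^ 2 + p ^ 2)

/-- `B(a,s,p) = (1/27)·|s|·(216 a²s + 216 (conj a)² (conj s) + 72|a|²p − 36|s|²p + p³)`;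
the combination `216 a²s + 216 (conj a)² (conj s) = 432 Re(a²s)` is real. -/
noncomputable def Bfun (a s : ℂ) (p : ℝ) : ℝ :=
  (1/27) * (‖s‖)
    * ((216 * a ^ 2 * s + 216 * (starRingEnd ℂ a) ^ 2 * (starRingEnd ℂ s)).re
       + 72 * (‖a‖) ^ 2 * p - 36 * (‖s‖) ^ 2 * p + p ^ 3)

/-- The discriminant inequality for a cubic with three real roots summing to `0`. -/
lemma cube_ineq (l1 l2 l3 : ℝ) (h0 : l1+l2+l3=0) :
    54*(l1*l2*l3)^2 ≤ (l1^2+l2^2+l3^2)^3 := by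
  have h : l3 = -l1-l2 := by linarith
  subst h
  nlinarith [sq_nonneg ((l1-l2)*(l1+2*l2)*(2*l1+l2))]

/-- The trace of a Hermitian matrix is the sum of its eigenvalues. -/
lemma trace_eq_sum_eig (N : Matrix (Fin 3) (Fin 3) ℂ) (hN : N.IsHermitian) :
    N.trace = ∑ i, (hN.eigenvalues i : ℂ) := by
  have h1 : (star (hN.eigenvectorUnitary : Matrix (Fin 3) (Fin 3) ℂ))
      * (hN.eigenvectorUnitary : Matrix (Fin 3) (Fin 3) ℂ) = 1 :=
    (Matrix.mem_unitaryGroup_iff').mp (hN.eigenvectorUnitary).2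
  conv_lhs => rw [hN.spectral_theorem, Unitary.conjStarAlgAut_apply]
  rw [Matrix.trace_mul_cycle, h1, one_mul, Matrix.trace_diagonal]
  simp

/-- The trace of the square of a Hermitian matrix is the sum of squared eigenvalues. -/
lemma trace_sq_eq_sum_eig (N : Matrix (Fin 3) (Fin 3) ℂ) (hN : N.IsHermitian) :
    (N*N).trace = ∑ i, (hN.eigenvalues i : ℂ)^2 := by
  have h1 : (star (hN.eigenvectorUnitary : Matrix (Fin 3) (Fin 3) ℂ))
      * (hN.eigenvectorUnitary : Matrix (Fin 3) (Fin 3) ℂ) = 1 :=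
    (Matrix.mem_unitaryGroup_iff').mp (hN.eigenvectorUnitary).2
  set U := (hN.eigenvectorUnitary : Matrix (Fin 3) (Fin 3) ℂ)
  set D := (Matrix.diagonal ((fun x : ℝ => (x:ℂ)) ∘ hN.eigenvalues) : Matrix (Fin 3) (Fin 3) ℂ)
  have hs : N = U * D * star U := by
    have := hN.spectral_theorem; rw [Unitary.conjStarAlgAut_apply] at this; exact this
  have h2 : N * N = U * (D * D) * star U := by
    rw [hs]
    calc (U * D * star U) * (U * D * star U)
        = U * D * ((star U * U) * (D * star U)) := by
          simp only [Matrix.mul_assoc]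
      _ = U * (D * D) * star U := by rw [h1, one_mul]; simp only [Matrix.mul_assoc]
  rw [h2, Matrix.trace_mul_cycle, h1, one_mul,
    Matrix.diagonal_mul_diagonal, Matrix.trace_diagonal]
  simp [Function.comp, sq]

/-- Auxiliary Hermitian matrix whose invariants realize `Afun` and `Bfun`. -/
noncomputable def Mmat (a s : ℂ) (p σ : ℝ) : Matrix (Fin 3) (Fin 3) ℂ :=
  !![2*(σ:ℂ)*(p:ℝ), 6*(Real.sqrt 2 : ℝ)*(σ:ℂ)*(starRingEnd ℂ a), 6*(Real.sqrt 2 : ℝ)*(σ:ℂ)*a;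
     6*(Real.sqrt 2 : ℝ)*(σ:ℂ)*a, -((σ:ℂ)*(p:ℝ)), 6*(σ:ℂ)*(starRingEnd ℂ s);
     6*(Real.sqrt 2 : ℝ)*(σ:ℂ)*(starRingEnd ℂ a), 6*(σ:ℂ)*s, -((σ:ℂ)*(p:ℝ))]

lemma Mmat_herm (a s : ℂ) (p σ : ℝ) : (Mmat a s p σ).IsHermitian := by
  unfold Matrix.IsHermitian
  ext i j
  fin_cases i <;> fin_cases j <;>
    simp [Mmat, Matrix.conjTranspose_apply, _root_.map_mul]

lemma Mmat_trace (a s : ℂ) (p σ : ℝ) : (Mmat a s p σ).trace = 0 := by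
  simp [Mmat, Matrix.trace_fin_three]
  ring

lemma Mmat_det (a s : ℂ) (p σ : ℝ) (hσ3 : σ^3 = ‖s‖) :
    ((Mmat a s p σ).det).re = 54 * Bfun a s p := by
  have h2 : (Real.sqrt 2)^2 = 2 := Real.sq_sqrt (by norm_num)
  have ha2 : (‖a‖)^2 = a.re^2 + a.im^2 := by
    rw [Complex.sq_norm, Complex.normSq_apply]; ring
  have hs6 : σ^6 = s.re^2 + s.im^2 := by
    have h : σ^6 = (σ^3)^2 := by ring
    rw [h, hσ3, Complex.sq_norm, Complex.normSq_apply]; ring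
  unfold Bfun
  rw [← hσ3, ha2]
  simp [Mmat, Matrix.det_fin_three, Complex.mul_re, Complex.mul_im, pow_two]
  ring_nf
  simp only [h2]
  linear_combination (72*p*σ^3) * hs6

lemma Mmat_trace_sq (a s : ℂ) (p σ : ℝ) (hσ : σ = (‖s‖) ^ ((1:ℝ)/3)) :
    (((Mmat a s p σ) * (Mmat a s p σ)).trace).re = 54 * Afun a s p := by
  have h2 : (Real.sqrt 2)^2 = 2 := Real.sq_sqrt (by norm_num)
  have hσ2 : (‖s‖) ^ ((2:ℝ)/3) = σ^2 := by
    rw [hσ, ← Real.rpow_natCast ((‖s‖) ^ ((1:ℝ)/3)) 2,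
      ← Real.rpow_mul (norm_nonneg s)]
    norm_num
  have hσ3 : σ^3 = ‖s‖ := by
    rw [hσ, ← Real.rpow_natCast ((‖s‖) ^ ((1:ℝ)/3)) 3,
      ← Real.rpow_mul (norm_nonneg s)]
    norm_num
  have ha2 : (‖a‖)^2 = a.re^2 + a.im^2 := by
    rw [Complex.sq_norm, Complex.normSq_apply]; ring
  have hs2 : (‖s‖)^2 = s.re^2 + s.im^2 := by
    rw [Complex.sq_norm, Complex.normSq_apply]; ring
  unfold Afun
  rw [hσ2, ha2, hs2]
  simp [Mmat, Matrix.trace_fin_three, Matrix.mul_apply, Fin.sum_univ_three,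
    Complex.mul_re, Complex.mul_im, Complex.add_re]
  ring_nf
  simp only [h2]
  ring

/-- For all `a, s ∈ ℂ` and `p ∈ ℝ`, `A(a,s,p)³ ≥ B(a,s,p)²`; i.e. the
degree-8 polynomial `F = A³ − B²` is everywhere nonnegative. -/
theorem A_cubed_ge_B_squared (a s : ℂ) (p : ℝ) :
    Bfun a s p ^ 2 ≤ Afun a s p ^ 3 := by
  set σ : ℝ := (‖s‖) ^ ((1:ℝ)/3) with hσ
  have hσ3 : σ^3 = ‖s‖ := by
    rw [hσ, ← Real.rpow_natCast ((‖s‖) ^ ((1:ℝ)/3)) 3,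
      ← Real.rpow_mul (norm_nonneg s)]
    norm_num
  set M := Mmat a s p σ with hM
  have hH := Mmat_herm a s p σ
  set l : Fin 3 → ℝ := hH.eigenvalues with hl
  -- sum of eigenvalues is 0
  have h0 : l 0 + l 1 + l 2 = 0 := by
    have := trace_eq_sum_eig M hH
    rw [Mmat_trace a s p σ] at this
    have h := congrArg Complex.re this
    simpa [Fin.sum_univ_three] using h.symm
  -- sum of squares of eigenvalues
  have hA : (l 0)^2 + (l 1)^2 + (l 2)^2 = 54 * Afun a s p := by
    have := trace_sq_eq_sum_eig M hH
    have h := congrArg Complex.re this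
    rw [Mmat_trace_sq a s p σ hσ, Fin.sum_univ_three] at h
    have e : ((l 0 : ℂ)^2 + (l 1 : ℂ)^2 + (l 2 : ℂ)^2).re = l 0^2 + l 1^2 + l 2^2 := by
      norm_cast
    rw [e] at h
    linarith
  -- product of eigenvalues
  have hB : (l 0) * (l 1) * (l 2) = 54 * Bfun a s p := by
    have := hH.det_eq_prod_eigenvalues
    have h := congrArg Complex.re this
    rw [Mmat_det a s p σ hσ3, Fin.prod_univ_three] at h
    rw [← hl] at h
    norm_cast at h
    exact (show (54:ℝ) * Bfun a s p = l 0 * l 1 * l 2 from h).symm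
  have key := cube_ineq (l 0) (l 1) (l 2) h0
  rw [hA, hB] at key
  nlinarith [key]
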